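/- In the cycle model C_n (n even, two agents A and B), the states a_{n+1} and a_{3n+1} disagree on the public-announcement sentence ⟨Pub p⟩◇*_{A,B} q: precisely, ⟦⟨Pub p⟩◇*_{A,B} q⟧_{C_n} = {a_i : 2n+2 ≤ i ≤ 5n}, so a_{3n+1} satisfies it while a_{n+1} does not. -/
import Mathlib


/-- The cycle model `C_n` lives on `ZMod (5*n)`, where the element `x` stands
for the point `a_{x+1}`.  Neighbouring points are joined by symmetric edges,
alternately labelled by the two agents A and B: the edge between `x` and `x+1`
belongs to A when `x` is even and to B when `x` is odd. -/
def relA (n : ℕ) (x y : ZMod (5 * n)) : Prop :=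
  (y = x + 1 ∧ x.val % 2 = 0) ∨ (x = y + 1 ∧ y.val % 2 = 0)

def relB (n : ℕ) (x y : ZMod (5 * n)) : Prop :=
  (y = x + 1 ∧ x.val % 2 = 1) ∨ (x = y + 1 ∧ y.val % 2 = 1)

/-- `p` holds at all points except `a_1` and `a_{2n+1}`. -/
def pAt (n : ℕ) (x : ZMod (5 * n)) : Prop :=
  x ≠ 0 ∧ x ≠ ((2 * n : ℕ) : ZMod (5 * n))

/-- `q` holds only at `a_{4n+1}`. -/
def qAt (n : ℕ) (x : ZMod (5 * n)) : Prop :=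
  x = ((4 * n : ℕ) : ZMod (5 * n))

/-- The accessibility relation of the model relativized by the public
announcement of `p`: both endpoints must satisfy `p`. -/
def relP (n : ℕ) (x y : ZMod (5 * n)) : Prop :=
  pAt n x ∧ pAt n y ∧ (relA n x y ∨ relB n x y)

/-- Truth of `⟨Pub p⟩◇*_{A,B} q` at `x`: `x` satisfies `p` and, in the
relativized model, some `q`-state is reachable from `x`. -/
def SatAnn (n : ℕ) (x : ZMod (5 * n)) : Prop :=
  pAt n x ∧ ∃ y, Relation.ReflTransGen (relP n) x y ∧ qAt n y

section Aux

variable {n : ℕ}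

lemma aux_neZero (hpos : 0 < n) : NeZero (5 * n) := ⟨by omega⟩

lemma aux_val_inj (hpos : 0 < n) {x y : ZMod (5 * n)} (h : x.val = y.val) : x = y := by
  haveI := aux_neZero hpos
  exact ZMod.val_injective _ h

lemma aux_val_cast (hpos : 0 < n) {a : ℕ} (h : a < 5 * n) :
    ((a : ZMod (5 * n)).val) = a := by
  haveI := aux_neZero hpos
  exact ZMod.val_cast_of_lt h

lemma aux_val_add_one (hpos : 0 < n) {x : ZMod (5 * n)} :
    (x + 1).val = (x.val + 1) % (5 * n) := by
  haveI := aux_neZero hpos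
  haveI : Fact (1 < 5 * n) := ⟨by omega⟩
  rw [ZMod.val_add, ZMod.val_one]

lemma aux_pAt_of_val (hpos : 0 < n) {x : ZMod (5 * n)}
    (h0 : x.val ≠ 0) (h2 : x.val ≠ 2 * n) : pAt n x := by
  haveI := aux_neZero hpos
  constructor
  · intro h; apply h0; rw [h]; simp
  · intro h; apply h2; rw [h]; exact aux_val_cast hpos (by omega)

lemma aux_step {x y : ZMod (5 * n)} (h : relP n x y) :
    pAt n x ∧ pAt n y ∧ (y = x + 1 ∨ x = y + 1) := by
  obtain ⟨hx, hy, h⟩ := h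
  refine ⟨hx, hy, ?_⟩
  rcases h with (⟨h,_⟩|⟨h,_⟩) | (⟨h,_⟩|⟨h,_⟩) <;> tauto

lemma aux_adj {x y : ZMod (5 * n)} (h : y = x + 1) : relA n x y ∨ relB n x y := by
  rcases Nat.even_or_odd x.val with he | ho
  · exact Or.inl (Or.inl ⟨h, Nat.even_iff.mp he⟩)
  · exact Or.inr (Or.inl ⟨h, Nat.odd_iff.mp ho⟩)

lemma aux_relP_symm {x y : ZMod (5 * n)} (h : relP n x y) : relP n y x := by
  obtain ⟨hx, hy, h⟩ := h
  refine ⟨hy, hx, ?_⟩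
  rcases h with (h|h) | (h|h)
  · exact Or.inl (Or.inr h)
  · exact Or.inl (Or.inl h)
  · exact Or.inr (Or.inr h)
  · exact Or.inr (Or.inl h)

lemma aux_rtg_symm {x y : ZMod (5 * n)}
    (h : Relation.ReflTransGen (relP n) x y) : Relation.ReflTransGen (relP n) y x := by
  induction h with
  | refl => exact .refl
  | tail _ hbc ih => exact Relation.ReflTransGen.head (aux_relP_symm hbc) ih

lemma aux_reach_fwd (hpos : 0 < n) (d : ℕ) : ∀ a : ℕ, 2 * n + 1 ≤ a → a + d < 5 * n →
    Relation.ReflTransGen (relP n) ((a : ℕ) : ZMod (5 * n)) ((a + d : ℕ) : ZMod (5 * n)) := by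
  induction d with
  | zero => intro a _ _; rw [Nat.add_zero]
  | succ d ih =>
    intro a ha hlt
    have h1 := ih a ha (by omega)
    refine h1.tail ?_
    have hcast : (((a + d + 1 : ℕ)) : ZMod (5 * n)) = ((a + d : ℕ) : ZMod (5 * n)) + 1 := by
      push_cast; ring
    refine ⟨?_, ?_, aux_adj hcast⟩
    · exact aux_pAt_of_val hpos (by rw [aux_val_cast hpos (by omega)]; omega)
        (by rw [aux_val_cast hpos (by omega)]; omega)
    · exact aux_pAt_of_val hpos (by rw [aux_val_cast hpos (by omega)]; omega)
        (by rw [aux_val_cast hpos (by omega)]; omega)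

lemma aux_inv (hpos : 0 < n) {x y : ZMod (5 * n)}
    (h : Relation.ReflTransGen (relP n) x y)
    (hx : 1 ≤ x.val ∧ x.val ≤ 2 * n - 1) : 1 ≤ y.val ∧ y.val ≤ 2 * n - 1 := by
  haveI := aux_neZero hpos
  induction h with
  | refl => exact hx
  | @tail b c hab hbc ih =>
    obtain ⟨_, hpc, hstep⟩ := aux_step hbc
    have hc0 : c.val ≠ 0 := fun h0 => hpc.1 (aux_val_inj hpos (by simpa using h0))
    have hc2 : c.val ≠ 2 * n := by
      intro h2
      exact hpc.2 (aux_val_inj hpos (by rw [h2, aux_val_cast hpos (by omega)]))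
    rcases hstep with hcb | hbc'
    · have hval : c.val = (b.val + 1) % (5 * n) := by rw [hcb, aux_val_add_one hpos]
      have hb5 : b.val + 1 < 5 * n := by omega
      rw [Nat.mod_eq_of_lt hb5] at hval
      omega
    · have hval : b.val = (c.val + 1) % (5 * n) := by rw [hbc', aux_val_add_one hpos]
      have hc5 : c.val < 5 * n := ZMod.val_lt c
      rcases Nat.lt_or_ge (c.val + 1) (5 * n) with h5 | h5
      · rw [Nat.mod_eq_of_lt h5] at hval; omega
      · have hc51 : c.val + 1 = 5 * n := by omega
        rw [hc51, Nat.mod_self] at hval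
        omega

end Aux

/-- In `C_n` (n even and positive), `⟨Pub p⟩◇*_{A,B} q` is true exactly at the
points `a_i` with `2n+2 ≤ i ≤ 5n` (i.e. those `x` with `x.val ≥ 2n+1`); in
particular `a_{3n+1}` satisfies it while `a_{n+1}` does not. -/
theorem cycle_model_announcement (n : ℕ) (hn : Even n) (hpos : 0 < n) :
    (∀ x : ZMod (5 * n), SatAnn n x ↔ 2 * n + 1 ≤ x.val) ∧
    SatAnn n ((3 * n : ℕ) : ZMod (5 * n)) ∧
    ¬ SatAnn n ((n : ℕ) : ZMod (5 * n)) := by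
  haveI := aux_neZero (n := n) hpos
  have key : ∀ x : ZMod (5 * n), SatAnn n x ↔ 2 * n + 1 ≤ x.val := by
    intro x
    constructor
    · rintro ⟨hp, y, hre, hq⟩
      by_contra hlt
      push_neg at hlt
      have hx0 : x.val ≠ 0 := fun h0 => hp.1 (aux_val_inj hpos (by simpa using h0))
      have hx2 : x.val ≠ 2 * n := by
        intro h2
        exact hp.2 (aux_val_inj hpos (by rw [h2, aux_val_cast hpos (by omega)]))
      have hinv := aux_inv hpos hre ⟨by omega, by omega⟩
      have hyval : y.val = 4 * n := by rw [hq, aux_val_cast hpos (by omega)]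
      omega
    · intro h
      have hx5 : x.val < 5 * n := ZMod.val_lt x
      have hxeq : ((x.val : ℕ) : ZMod (5 * n)) = x := by
        rw [ZMod.natCast_val, ZMod.cast_id]
      have hpx : pAt n x := aux_pAt_of_val hpos (by omega) (by omega)
      refine ⟨hpx, ((4 * n : ℕ) : ZMod (5 * n)), ?_, rfl⟩
      rcases le_or_gt x.val (4 * n) with h4 | h4
      · have hr := aux_reach_fwd hpos (4 * n - x.val) x.val h (by omega)
        rw [show x.val + (4 * n - x.val) = 4 * n by omega] at hr
        rwa [hxeq] at hr
      · have hr := aux_reach_fwd hpos (x.val - 4 * n) (4 * n) (by omega) (by omega)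
        rw [show 4 * n + (x.val - 4 * n) = x.val by omega, hxeq] at hr
        exact aux_rtg_symm hr
  refine ⟨key, ?_, ?_⟩
  · rw [key, aux_val_cast hpos (by omega)]; omega
  · rw [key, aux_val_cast hpos (by omega)]; omega
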